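/- For every matrix A ∈ 𝕋±^{d×n}, the signed tropical convex hull tconv(A) is a tropically convex set; consequently tconv(tconv(A)) = tconv(A). -/
import Mathlib


/-!  Signed tropical numbers 𝕋±, the symmetrized tropical semiring 𝕊,
     and signed tropical convexity (Loho–Végh). -/

inductive SSign : Type where
  | pos : SSign
  | neg : SSign
  | bal : SSign
deriving DecidableEq

/-- The symmetrized tropical semiring 𝕊: the tropical zero 𝟘 = -∞ together with
elements `elem s r` where `s` is a sign (⊕, ⊖ or •) and `r` a real number. -/
inductive STrop : Type where
  | zero : STrop
  | elem : SSign → ℝ → STrop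

namespace STrop

/-- membership in the signed tropical numbers 𝕋± (i.e. not balanced-nonzero). -/
def isSigned : STrop → Prop
  | elem SSign.bal _ => False
  | _ => True

/-- membership in 𝕋≥, the nonnegative tropical numbers. -/
def nneg : STrop → Prop
  | zero => True
  | elem SSign.pos _ => True
  | _ => False

/-- membership in 𝕋≤, the nonpositive tropical numbers. -/
def npos : STrop → Prop
  | zero => True
  | elem SSign.neg _ => True
  | _ => False

/-- strictly positive signed element (sign ⊕, not 𝟘). -/
def isPos : STrop → Prop
  | elem SSign.pos _ => True
  | _ => False

/-- balanced or 𝟘 (membership in 𝕋•). -/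
def balZero : STrop → Prop
  | zero => True
  | elem SSign.bal _ => True
  | _ => False

/-- the negation map ⊖. -/
def neg : STrop → STrop
  | zero => zero
  | elem SSign.pos r => elem SSign.neg r
  | elem SSign.neg r => elem SSign.pos r
  | elem SSign.bal r => elem SSign.bal r

/-- tropical addition ⊕ on 𝕊. -/
noncomputable def add : STrop → STrop → STrop
  | zero, y => y
  | x, zero => x
  | elem s r, elem t u =>
    if r < u then elem t u
    else if u < r then elem s r
    else if s = t then elem s r
    else elem SSign.bal r

def signMul : SSign → SSign → SSign
  | SSign.pos, t => t
  | SSign.neg, SSign.pos => SSign.neg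
  | SSign.neg, SSign.neg => SSign.pos
  | SSign.neg, SSign.bal => SSign.bal
  | SSign.bal, _ => SSign.bal

/-- tropical multiplication ⊙ on 𝕊. -/
def mul : STrop → STrop → STrop
  | zero, _ => zero
  | _, zero => zero
  | elem s r, elem t u => elem (signMul s t) (r + u)

/-- a ⊖ b := a ⊕ (⊖b). -/
noncomputable def sub (x y : STrop) : STrop := add x (neg y)

/-- the tropical one, the signed element ⊕0. -/
def one : STrop := elem SSign.pos 0

/-- the absolute value |·| : 𝕊 → 𝕋≥. -/
def absS : STrop → STrop
  | zero => zero
  | elem _ r => elem SSign.pos r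

/-- strict order: x > y iff x ⊖ y is a strictly positive signed element. -/
def sgt (x y : STrop) : Prop := isPos (sub x y)

/-- balance relation: x ⋈ y iff x ⊖ y is balanced or 𝟘. -/
def bal (x y : STrop) : Prop := balZero (sub x y)

/-- the relation ⊵ : x ⊵ y iff x > y or x ⋈ y. -/
def teq (x y : STrop) : Prop := sgt x y ∨ bal x y

/-- the total order ≤ on the signed tropical numbers 𝕋±
(arbitrarily `False` whenever a balanced element is involved). -/
def sle : STrop → STrop → Prop
  | zero, zero => True
  | zero, elem SSign.pos _ => True
  | elem SSign.neg _, zero => True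
  | elem SSign.neg _, elem SSign.pos _ => True
  | elem SSign.pos r, elem SSign.pos u => r ≤ u
  | elem SSign.neg r, elem SSign.neg u => u ≤ r
  | _, _ => False

/-- U(a): the set of signed numbers incomparable with a; the singleton {a}
for signed a, and the order interval [⊖|a|, |a|] for balanced a. -/
def U : STrop → Set STrop
  | elem SSign.bal r => {x | isSigned x ∧ sle (elem SSign.neg r) x ∧ sle x (elem SSign.pos r)}
  | a => {a}

/-- tropical sum of finitely many elements of 𝕊. -/
noncomputable def sumFin : ∀ {n : ℕ}, (Fin n → STrop) → STrop
  | 0, _ => zero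
  | _ + 1, f => add (f 0) (sumFin fun i => f i.succ)

/-- matrix–vector product A ⊙ x over 𝕊. -/
noncomputable def mv {d n : ℕ} (A : Fin d → Fin n → STrop) (x : Fin n → STrop) : Fin d → STrop :=
  fun i => sumFin fun j => mul (A i j) (x j)

/-- vectors in 𝕋±^d. -/
def isSignedVec {d : ℕ} (v : Fin d → STrop) : Prop := ∀ i, isSigned (v i)

/-- the signed tropical convex hull of the columns of a matrix A:
tconv(A) = {z ∈ 𝕋±^d : z ⋈ A⊙x for some x ∈ 𝕋≥^n with ⊕_j x_j = 0}. -/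
def tconv {d n : ℕ} (A : Fin d → Fin n → STrop) : Set (Fin d → STrop) :=
  {z | isSignedVec z ∧ ∃ x : Fin n → STrop,
    (∀ j, nneg (x j)) ∧ sumFin x = one ∧ ∀ i, bal (z i) (mv A x i)}

/-- the signed tropical convex hull of an arbitrary set: the union of the hulls
of all finite collections of points of M. -/
def tconvSet {d : ℕ} (M : Set (Fin d → STrop)) : Set (Fin d → STrop) :=
  ⋃ (n : ℕ) (A : Fin d → Fin n → STrop) (_ : ∀ j, (fun i => A i j) ∈ M), tconv A

/-- a set M ⊆ 𝕋±^d is tropically convex iff M = tconv(M). -/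
def TropConvex {d : ℕ} (M : Set (Fin d → STrop)) : Prop := M = tconvSet M

/-- evaluation a ⊙ (0, x₁, …, x_d)ᵀ of an affine functional. -/
noncomputable def affEval {d : ℕ} (a : Fin (d + 1) → STrop) (x : Fin d → STrop) : STrop :=
  sumFin fun j => mul (a j) ((Fin.cons one x : Fin (d + 1) → STrop) j)

/-- the open signed tropical halfspace H⁺(a) = {x ∈ 𝕋±^d : a⊙(0,x)ᵀ > 𝟘}. -/
def Hopen {d : ℕ} (a : Fin (d + 1) → STrop) : Set (Fin d → STrop) :=
  {x | isSignedVec x ∧ sgt (affEval a x) zero}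

/-- the closed signed tropical halfspace H̄⁺(a) = {x ∈ 𝕋±^d : a⊙(0,x)ᵀ ⊵ 𝟘}. -/
def Hclosed {d : ℕ} (a : Fin (d + 1) → STrop) : Set (Fin d → STrop) :=
  {x | isSignedVec x ∧ teq (affEval a x) zero}

/-- the non-negative kernel nnker(A). -/
def nnker {d n : ℕ} (A : Fin d → Fin n → STrop) : Set (Fin n → STrop) :=
  {x | (∀ j, nneg (x j)) ∧ x ≠ (fun _ => zero) ∧ ∀ i, balZero (mv A x i)}

/-- the open tropical cone sep(A) = {y ∈ 𝕋±^d : yᵀ⊙A > 𝟘 componentwise}. -/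
def sep {d : ℕ} {J : Type} (A : Fin d → J → STrop) : Set (Fin d → STrop) :=
  {y | isSignedVec y ∧ ∀ j, isPos (sumFin fun i => mul (y i) (A i j))}

end STrop

namespace STrop

lemma zero_addS (x : STrop) : add zero x = x := by cases x <;> rfl
lemma add_zeroS (x : STrop) : add x zero = x := by cases x <;> rfl

lemma add_commS (x y : STrop) : add x y = add y x := by
  cases x with
  | zero => cases y <;> rfl
  | elem s r =>
    cases y with
    | zero => rfl
    | elem t u =>
      simp only [add]
      rcases lt_trichotomy r u with h | h | h
      · rw [if_pos h, if_neg (not_lt_of_gt h), if_pos h]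
      · subst h
        rw [if_neg (lt_irrefl r), if_neg (lt_irrefl r), if_neg (lt_irrefl r),
          if_neg (lt_irrefl r)]
        by_cases hs : s = t
        · subst hs; simp
        · rw [if_neg hs, if_neg (Ne.symm hs)]
      · rw [if_neg (not_lt_of_gt h), if_pos h, if_pos h]

lemma add_assocS (x y z : STrop) : add (add x y) z = add x (add y z) := by
  cases x with
  | zero => simp [zero_addS]
  | elem s r =>
    cases y with
    | zero => simp [zero_addS, add_zeroS]
    | elem t u =>
      cases z with
      | zero => simp [add_zeroS]
      | elem p w =>
        simp only [add]
        split_ifs <;> simp_all only [add] <;> split_ifs <;>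
          simp_all <;> first | rfl | linarith

end STrop

namespace STrop

lemma neg_zeroS : neg zero = zero := rfl

lemma neg_addS (x y : STrop) : neg (add x y) = add (neg x) (neg y) := by
  cases x with
  | zero => cases y <;> simp [add, neg]
  | elem s r =>
    cases y with
    | zero => cases s <;> simp [add, neg]
    | elem t u =>
      cases s <;> cases t <;>
        (rcases lt_trichotomy r u with h | h | h
         · simp [add, neg, h, not_lt_of_gt h]
         · subst h; simp [add, neg, lt_irrefl]
         · simp [add, neg, h, not_lt_of_gt h])

lemma mul_zeroS (x : STrop) : mul x zero = zero := by cases x <;> rfl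
lemma zero_mulS (x : STrop) : mul zero x = zero := by cases x <;> rfl

lemma one_mulS (x : STrop) : mul one x = x := by
  cases x with
  | zero => rfl
  | elem s r => simp [one, mul, signMul]

lemma mul_oneS (x : STrop) : mul x one = x := by
  cases x with
  | zero => rfl
  | elem s r => cases s <;> simp [one, mul, signMul]

lemma signMul_assoc (s t u : SSign) :
    signMul (signMul s t) u = signMul s (signMul t u) := by
  cases s <;> cases t <;> cases u <;> rfl

lemma mul_assocS (x y z : STrop) : mul (mul x y) z = mul x (mul y z) := by
  cases x <;> cases y <;> cases z <;>
    simp [mul, signMul_assoc, add_assoc]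

lemma mul_commS (x y : STrop) : mul x y = mul y x := by
  cases x with
  | zero => cases y <;> rfl
  | elem s r =>
    cases y with
    | zero => rfl
    | elem t u => cases s <;> cases t <;> simp [mul, signMul, add_comm]

lemma neg_mulS (x y : STrop) : neg (mul x y) = mul (neg x) y := by
  cases x with
  | zero => cases y <;> simp [mul, neg, zero_mulS]
  | elem s r =>
    cases y with
    | zero => cases s <;> simp [mul, neg]
    | elem t u => cases s <;> cases t <;> simp [mul, signMul, neg]

lemma right_distribS (x y z : STrop) :
    mul (add x y) z = add (mul x z) (mul y z) := by
  cases x with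
  | zero => simp [zero_addS, zero_mulS]
  | elem s r =>
    cases y with
    | zero => simp [add_zeroS, zero_mulS, mul_zeroS]
    | elem t u =>
      cases z with
      | zero => simp [mul_zeroS, add_zeroS]
      | elem p w =>
        rcases lt_trichotomy r u with h | h | h
        · simp [add, mul, add_lt_add_iff_right, h, not_lt_of_gt h]
        · subst h
          by_cases hst : s = t
          · subst hst; simp [add, mul, lt_irrefl]
          · cases s <;> cases t <;> cases p <;>
              simp_all [add, mul, signMul, lt_irrefl]
        · simp [add, mul, add_lt_add_iff_right, h, not_lt_of_gt h]

lemma left_distribS (x y z : STrop) :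
    mul z (add x y) = add (mul z x) (mul z y) := by
  rw [mul_commS, right_distribS, mul_commS x z, mul_commS y z]

/-- absolute value as `WithBot ℝ`. -/
def absR : STrop → WithBot ℝ
  | zero => ⊥
  | elem _ r => (r : WithBot ℝ)

lemma absR_add (x y : STrop) : absR (add x y) = max (absR x) (absR y) := by
  cases x with
  | zero => cases y <;> simp [add, absR]
  | elem s r =>
    cases y with
    | zero => simp [add, absR]
    | elem t u =>
      rcases lt_trichotomy r u with h | h | h
      · simp [add, h, absR]
        exact_mod_cast h.le
      · subst h
        by_cases hst : s = t <;> simp [add, lt_irrefl, hst, absR]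
      · simp [add, h, not_lt_of_gt h, absR]
        exact_mod_cast h.le

lemma absR_eq_bot (x : STrop) : absR x = ⊥ ↔ x = zero := by
  cases x <;> simp [absR]

end STrop

namespace STrop

lemma balZero_addS {x y : STrop} (hx : balZero x) (hy : balZero y) :
    balZero (add x y) := by
  cases x with
  | zero => cases y <;> simpa [add] using hy
  | elem s r =>
    cases y with
    | zero => simpa [add] using hx
    | elem t u =>
      cases s <;> cases t <;> simp_all [balZero] <;>
        (simp only [add]; split_ifs <;> simp [balZero])

lemma bal_selfS (x : STrop) : bal x x := by
  cases x with
  | zero => simp [bal, sub, add, neg, balZero]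
  | elem s r => cases s <;> simp [bal, sub, add, neg, balZero, lt_irrefl]

lemma add_add_add_commS (a b c d : STrop) :
    add (add a b) (add c d) = add (add a c) (add b d) := by
  rw [add_assocS, ← add_assocS b c d, add_commS b c, add_assocS c b d, ← add_assocS]

lemma bal_addS {a b c d : STrop} (h1 : bal a b) (h2 : bal c d) :
    bal (add a c) (add b d) := by
  unfold bal sub at *
  rw [neg_addS, add_add_add_commS]
  exact balZero_addS h1 h2

lemma balZero_mulS {x : STrop} (c : STrop) (hx : balZero x) :
    balZero (mul x c) := by
  cases x with
  | zero => simpa [zero_mulS] using hx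
  | elem s r =>
    cases s <;> simp_all [balZero] <;> cases c <;> simp [mul, signMul, balZero]

lemma bal_mulS {a b : STrop} (c : STrop) (h : bal a b) :
    bal (mul a c) (mul b c) := by
  unfold bal sub at *
  rw [neg_mulS, ← right_distribS]
  exact balZero_mulS c h

lemma eq_of_bal_signed (x y : STrop) (hx : isSigned x) (hy : isSigned y)
    (h : bal x y) : x = y := by
  cases x with
  | zero =>
    cases y with
    | zero => rfl
    | elem t u => cases t <;> simp_all [bal, sub, add, neg, balZero, isSigned]
  | elem s r =>
    cases y with
    | zero => cases s <;> simp_all [bal, sub, add, neg, balZero, isSigned]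
    | elem t u =>
      cases s <;> cases t <;> simp_all [isSigned] <;>
        rcases lt_trichotomy r u with hlt | hlt | hlt <;>
          first
          | (exfalso;
             simp [bal, sub, add, neg, hlt, not_lt_of_gt hlt, balZero] at h)
          | simp_all [bal, sub, add, neg, lt_irrefl, balZero]

lemma eq_zero_of_balZero_signed (x : STrop) (hx : isSigned x)
    (h : balZero x) : x = zero := by
  cases x with
  | zero => rfl
  | elem s r => cases s <;> simp_all [isSigned, balZero]

lemma absR_le_of_bal (x y : STrop) (hx : isSigned x) (h : bal x y) :
    absR x ≤ absR y := by
  cases x with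
  | zero => exact bot_le
  | elem s r =>
    cases y with
    | zero =>
      exfalso; cases s <;> simp_all [bal, sub, add, neg, balZero, isSigned]
    | elem t u =>
      show (r : WithBot ℝ) ≤ (u : WithBot ℝ)
      rcases le_or_gt r u with hle | hlt
      · exact_mod_cast hle
      · exfalso
        cases s <;> cases t <;>
          simp_all [bal, sub, add, neg, balZero, isSigned, hlt, not_lt_of_gt hlt]

lemma bal_of_absR_le_bal (z : STrop) (r : ℝ) (h : absR z ≤ (r : WithBot ℝ)) :
    bal z (elem SSign.bal r) := by
  cases z with
  | zero => simp [bal, sub, add, neg, balZero]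
  | elem s a =>
    have ha : a ≤ r := by simpa [absR] using h
    rcases eq_or_lt_of_le ha with he | hlt
    · subst he
      by_cases hs : s = SSign.bal <;>
        simp [bal, sub, add, neg, lt_irrefl, hs, balZero]
    · simp [bal, sub, add, neg, hlt, not_lt_of_gt hlt, balZero]

end STrop

namespace STrop

lemma sumFin_zero (f : Fin 0 → STrop) : sumFin f = zero := rfl

lemma sumFin_succ {m : ℕ} (f : Fin (m + 1) → STrop) :
    sumFin f = add (f 0) (sumFin fun i => f i.succ) := rfl

lemma sumFin_bot {m : ℕ} : sumFin (fun _ : Fin m => zero) = zero := by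
  induction m with
  | zero => rfl
  | succ m ih => rw [sumFin_succ, ih, add_zeroS]

lemma sumFin_addS {m : ℕ} (f g : Fin m → STrop) :
    sumFin (fun i => add (f i) (g i)) = add (sumFin f) (sumFin g) := by
  induction m with
  | zero => simp [sumFin_zero, add_zeroS]
  | succ m ih =>
    rw [sumFin_succ, sumFin_succ f, sumFin_succ g, ih, add_add_add_commS]

lemma sumFin_swap {m n : ℕ} (f : Fin m → Fin n → STrop) :
    sumFin (fun i => sumFin fun j => f i j) =
      sumFin fun j => sumFin fun i => f i j := by
  induction m with
  | zero => simp [sumFin_zero, sumFin_bot]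
  | succ m ih =>
    rw [sumFin_succ]
    rw [ih fun i j => f i.succ j]
    rw [← sumFin_addS]
    rfl

lemma sumFin_mul_right {m : ℕ} (f : Fin m → STrop) (c : STrop) :
    sumFin (fun i => mul (f i) c) = mul (sumFin f) c := by
  induction m with
  | zero => simp [sumFin_zero, zero_mulS]
  | succ m ih => rw [sumFin_succ, sumFin_succ f, ih, right_distribS]

lemma sumFin_mul_left {m : ℕ} (f : Fin m → STrop) (c : STrop) :
    sumFin (fun i => mul c (f i)) = mul c (sumFin f) := by
  rw [show (fun i => mul c (f i)) = fun i => mul (f i) c from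
    funext fun i => mul_commS _ _, sumFin_mul_right, mul_commS]

lemma absR_sumFin_le {m : ℕ} (f g : Fin m → STrop)
    (h : ∀ i, absR (f i) ≤ absR (g i)) :
    absR (sumFin f) ≤ absR (sumFin g) := by
  induction m with
  | zero => simp [sumFin_zero]
  | succ m ih =>
    rw [sumFin_succ, sumFin_succ g, absR_add, absR_add]
    exact max_le_max (h 0) (ih _ _ fun i => h i.succ)

lemma nneg_addS {x y : STrop} (hx : nneg x) (hy : nneg y) : nneg (add x y) := by
  cases x with
  | zero => simpa [add] using hy
  | elem s r =>
    cases y with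
    | zero => simpa [add] using hx
    | elem t u =>
      cases s <;> cases t <;> simp_all [nneg] <;>
        (simp only [add]; split_ifs <;> simp_all [nneg])

lemma nneg_sumFin {m : ℕ} (f : Fin m → STrop) (h : ∀ i, nneg (f i)) :
    nneg (sumFin f) := by
  induction m with
  | zero => simp [sumFin_zero, nneg]
  | succ m ih =>
    rw [sumFin_succ]
    exact nneg_addS (h 0) (ih _ fun i => h i.succ)

lemma nneg_mulS {x y : STrop} (hx : nneg x) (hy : nneg y) : nneg (mul x y) := by
  cases x with
  | zero => simp [zero_mulS, nneg]
  | elem s r =>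
    cases y with
    | zero => simp [mul_zeroS, nneg]
    | elem t u => cases s <;> cases t <;> simp_all [nneg, mul, signMul]

lemma isSigned_of_nneg {x : STrop} (hx : nneg x) : isSigned x := by
  cases x with
  | zero => trivial
  | elem s r => cases s <;> simp_all [nneg, isSigned]

lemma isSigned_mulS {x y : STrop} (hx : isSigned x) (hy : isSigned y) :
    isSigned (mul x y) := by
  cases x with
  | zero => simp [zero_mulS, isSigned]
  | elem s r =>
    cases y with
    | zero => simp [mul_zeroS, isSigned]
    | elem t u => cases s <;> cases t <;> simp_all [isSigned, mul, signMul]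

lemma bal_sumFin {m : ℕ} (f g : Fin m → STrop) (h : ∀ i, bal (f i) (g i)) :
    bal (sumFin f) (sumFin g) := by
  induction m with
  | zero => exact bal_selfS zero
  | succ m ih =>
    rw [sumFin_succ, sumFin_succ g]
    exact bal_addS (h 0) (ih _ _ fun i => h i.succ)

lemma add_eq_elem {x y : STrop} {s : SSign} {r : ℝ} (hs : s ≠ SSign.bal)
    (h : add x y = elem s r) :
    (x = elem s r ∨ absR x < (r : WithBot ℝ)) ∧
      (y = elem s r ∨ absR y < (r : WithBot ℝ)) ∧
      (x = elem s r ∨ y = elem s r) := by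
  cases x with
  | zero =>
    rw [zero_addS] at h
    exact ⟨Or.inr (by simp [absR]), Or.inl h, Or.inr h⟩
  | elem a p =>
    cases y with
    | zero =>
      rw [add_zeroS] at h
      exact ⟨Or.inl h, Or.inr (by simp [absR]), Or.inl h⟩
    | elem b q =>
      simp only [add] at h
      split_ifs at h with h1 h2 h3
      · injection h with hb hq; subst hb; subst hq
        exact ⟨Or.inr (by simpa [absR] using h1), Or.inl rfl, Or.inr rfl⟩
      · injection h with hb hq; subst hb; subst hq
        exact ⟨Or.inl rfl, Or.inr (by simpa [absR] using h2), Or.inl rfl⟩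
      · have hpq : p = q := le_antisymm (not_lt.mp h2) (not_lt.mp h1)
        injection h with hb hq; subst hb; subst hq; subst h3; subst hpq
        exact ⟨Or.inl rfl, Or.inl rfl, Or.inl rfl⟩
      · exfalso; injection h with hb hq; exact hs hb.symm

lemma add_eq_elem_intro {x y : STrop} {s : SSign} {r : ℝ}
    (hx : x = elem s r ∨ absR x < (r : WithBot ℝ))
    (hy : y = elem s r ∨ absR y < (r : WithBot ℝ))
    (hxy : x = elem s r ∨ y = elem s r) :
    add x y = elem s r := by
  rcases hx with hx | hx
  · subst hx
    rcases hy with hy | hy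
    · subst hy; simp [add, lt_irrefl]
    · cases y with
      | zero => rw [add_zeroS]
      | elem b q =>
        have hq : q < r := by simpa [absR] using hy
        simp [add, hq, not_lt_of_gt hq]
  · rcases hxy with hxy | hxy
    · exact absurd hxy (by rintro rfl; simp [absR] at hx)
    · subst hxy
      cases x with
      | zero => rw [zero_addS]
      | elem b q =>
        have hq : q < r := by simpa [absR] using hx
        simp [add, hq, not_lt_of_gt hq]

lemma sumFin_signed_rigid {m : ℕ} (u v : Fin m → STrop)
    (hu : ∀ k, isSigned (u k)) (huv : ∀ k, bal (u k) (v k))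
    {s : SSign} {r : ℝ} (hs : s ≠ SSign.bal)
    (hv : sumFin v = elem s r) : sumFin u = elem s r := by
  induction m with
  | zero => simp [sumFin_zero] at hv
  | succ m ih =>
    rw [sumFin_succ] at hv
    obtain ⟨h1, h2, h3⟩ := add_eq_elem hs hv
    have hsigned : isSigned (elem s r) := by
      cases s <;> simp_all [isSigned]
    rw [sumFin_succ]
    apply add_eq_elem_intro
    · rcases h1 with h1 | h1
      · left
        exact eq_of_bal_signed _ _ (hu 0) (h1 ▸ hsigned) ((h1 ▸ huv 0))
      · right
        exact lt_of_le_of_lt (absR_le_of_bal _ _ (hu 0) (huv 0)) h1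
    · rcases h2 with h2 | h2
      · left
        exact ih _ _ (fun k => hu k.succ) (fun k => huv k.succ) h2
      · right
        refine lt_of_le_of_lt (absR_sumFin_le _ _ fun k => ?_) h2
        exact absR_le_of_bal _ _ (hu k.succ) (huv k.succ)
    · rcases h3 with h3 | h3
      · left
        exact eq_of_bal_signed _ _ (hu 0) (h3 ▸ hsigned) ((h3 ▸ huv 0))
      · right
        exact ih _ _ (fun k => hu k.succ) (fun k => huv k.succ) h3

lemma bal_sum_trans {m : ℕ} (u v : Fin m → STrop)
    (hu : ∀ k, isSigned (u k)) (huv : ∀ k, bal (u k) (v k))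
    (z : STrop) (hz : isSigned z) (h : bal z (sumFin u)) :
    bal z (sumFin v) := by
  have hsum : absR (sumFin u) ≤ absR (sumFin v) :=
    absR_sumFin_le _ _ fun k => absR_le_of_bal _ _ (hu k) (huv k)
  have hz' : absR z ≤ absR (sumFin u) := absR_le_of_bal _ _ hz h
  cases hc : sumFin v with
  | zero =>
    have hu0 : sumFin u = zero := by
      rw [hc] at hsum
      exact (absR_eq_bot _).mp (le_bot_iff.mp hsum)
    rw [hu0] at h
    have hz0 : z = zero := eq_of_bal_signed z zero hz trivial h
    rw [hz0]
    exact bal_selfS zero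
  | elem s r =>
    by_cases hsb : s = SSign.bal
    · subst hsb
      apply bal_of_absR_le_bal
      calc absR z ≤ absR (sumFin u) := hz'
        _ ≤ absR (sumFin v) := hsum
        _ = (r : WithBot ℝ) := by rw [hc]; rfl
    · have hrig : sumFin u = elem s r :=
        sumFin_signed_rigid u v hu huv hsb hc
      rw [hrig] at h
      exact h

end STrop

open STrop in
/-- tconv(A) is tropically convex; consequently
tconv(tconv(A)) = tconv(A). -/
theorem tconv_closure (d n : ℕ) (A : Fin d → Fin n → STrop)
    (hA : ∀ i j, STrop.isSigned (A i j)) :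
    STrop.TropConvex (STrop.tconv A) ∧
      STrop.tconvSet (STrop.tconv A) = STrop.tconv A := by
  have E : STrop.tconvSet (STrop.tconv A) = STrop.tconv A := by
    apply Set.Subset.antisymm
    · -- tconvSet (tconv A) ⊆ tconv A
      intro z hz
      simp only [tconvSet, Set.mem_iUnion] at hz
      obtain ⟨m, B, hB, hzB⟩ := hz
      obtain ⟨hzs, y, hy, hy1, hzbal⟩ := hzB
      have hB1 : ∀ k, isSignedVec (fun i => B i k) := fun k => (hB k).1
      have hB2 : ∀ k, ∃ x : Fin n → STrop, (∀ j, nneg (x j)) ∧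
          sumFin x = one ∧ ∀ i, bal (B i k) (mv A x i) := fun k => (hB k).2
      choose x hxn hx1 hxbal using hB2
      refine ⟨hzs, fun j => sumFin (fun k => mul (x k j) (y k)), ?_, ?_, ?_⟩
      · intro j
        exact nneg_sumFin _ fun k => nneg_mulS (hxn k j) (hy k)
      · rw [sumFin_swap]
        have hcol : ∀ k, (sumFin fun j => mul (x k j) (y k)) = y k := by
          intro k; rw [sumFin_mul_right, hx1 k, one_mulS]
        simp only [hcol]
        exact hy1
      · intro i
        have hM : mv A (fun j => sumFin fun k => mul (x k j) (y k)) i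
            = sumFin (fun k => mul (mv A (x k) i) (y k)) := by
          show sumFin (fun j => mul (A i j) (sumFin fun k => mul (x k j) (y k)))
              = _
          have hpush : ∀ j, mul (A i j) (sumFin fun k => mul (x k j) (y k))
              = sumFin fun k => mul (mul (A i j) (x k j)) (y k) := by
            intro j
            rw [← sumFin_mul_left]
            congr 1
            funext k
            rw [← mul_assocS]
          simp only [hpush]
          rw [sumFin_swap]
          congr 1
          funext k
          rw [sumFin_mul_right]
          rfl
        rw [hM]
        exact bal_sum_trans (fun k => mul (B i k) (y k)) _
          (fun k => isSigned_mulS (hB1 k i) (isSigned_of_nneg (hy k)))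
          (fun k => bal_mulS (y k) (hxbal k i))
          (z i) (hzs i) (hzbal i)
    · -- tconv A ⊆ tconvSet (tconv A)
      intro z hz
      simp only [tconvSet, Set.mem_iUnion]
      refine ⟨1, fun i _ => z i, fun _ => hz, hz.1, fun _ => one, ?_, ?_, ?_⟩
      · intro j; simp [one, nneg]
      · rw [sumFin_succ, sumFin_zero, add_zeroS]
      · intro i
        have hmv : mv (fun i (_ : Fin 1) => z i) (fun _ => one) i = z i := by
          show sumFin (fun _ : Fin 1 => mul (z i) one) = z i
          rw [sumFin_succ, sumFin_zero, add_zeroS, mul_oneS]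
        rw [hmv]
        exact bal_selfS _
  exact ⟨E.symm, E⟩
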